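/- Let f : ℝ → ℂ be a Schwartz function, b ∈ ℝ, and a > 0. Then for every a′ > 0 the principal value defining W₂(a′,b) exists, and the function a′ ↦ W₂(a′,b) is differentiable at a with derivative ∂W₂/∂a (a,b) = −(1/(2π a²))·∫_ℝ f(t)·e^{πi(t−b)/a} dt. -/

import Mathlib

open Real Complex MeasureTheory Filter Set

noncomputable section

namespace W2Aux

variable (f : SchwartzMap ℝ ℂ) (b : ℝ)

/-- The translated integrand. -/
def phi (a' u : ℝ) : ℂ := f (b + u) * Complex.exp (Real.pi * Complex.I * u / a')

/-- The symmetrized PV kernel. -/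
def K (a' s : ℝ) : ℂ := (phi f b a' s - phi f b a' (-s)) / s

/-- The candidate `W₂`. -/
def W (a' : ℝ) : ℂ :=
  -(Complex.I / (2 * (Real.pi : ℂ) ^ 2)) * ∫ s in Ioi (0:ℝ), K f b a' s

/-- a'-derivative of `K`. -/
def K' (a' s : ℝ) : ℂ :=
  (phi f b a' s * (-(Real.pi * Complex.I * s / (a' : ℂ) ^ 2)) -
    phi f b a' (-s) * (-(Real.pi * Complex.I * (-s : ℝ) / (a' : ℂ) ^ 2))) / s

lemma norm_cexp (a' u : ℝ) : ‖Complex.exp (Real.pi * Complex.I * u / a')‖ = 1 := by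
  rw [show (Real.pi * Complex.I * u / a' : ℂ) = ((Real.pi * u / a' : ℝ) : ℂ) * Complex.I by
    push_cast; ring, Complex.norm_exp_ofReal_mul_I]

lemma norm_phi (a' u : ℝ) : ‖phi f b a' u‖ = ‖f (b + u)‖ := by
  rw [phi, norm_mul, norm_cexp, mul_one]

lemma continuous_phi (a' : ℝ) : Continuous (phi f b a') := by
  apply (f.continuous.comp (continuous_const.add continuous_id)).mul
  exact Complex.continuous_exp.comp
    ((continuous_const.mul Complex.continuous_ofReal).div_const _)

lemma aesm_K (a' : ℝ) (μ : Measure ℝ) : AEStronglyMeasurable (K f b a') μ := by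
  have : K f b a' = fun s => (phi f b a' s - phi f b a' (-s)) * ((s : ℂ))⁻¹ := by
    funext s; rw [K, div_eq_mul_inv]
  rw [this]
  exact (((continuous_phi f b a').sub
    ((continuous_phi f b a').comp continuous_neg)).aestronglyMeasurable).mul
    (Complex.measurable_ofReal.inv.aestronglyMeasurable)

lemma aesm_K' (a' : ℝ) (μ : Measure ℝ) : AEStronglyMeasurable (K' f b a') μ := by
  have : K' f b a' = fun s =>
      (phi f b a' s * (-(Real.pi * Complex.I * s / (a' : ℂ) ^ 2)) -
        phi f b a' (-s) * (-(Real.pi * Complex.I * (-s : ℝ) / (a' : ℂ) ^ 2))) * ((s : ℂ))⁻¹ := by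
    funext s; rw [K', div_eq_mul_inv]
  rw [this]
  apply AEStronglyMeasurable.mul ?_ (Complex.measurable_ofReal.inv.aestronglyMeasurable)
  apply Continuous.aestronglyMeasurable
  apply Continuous.sub
  · exact (continuous_phi f b a').mul
      (((continuous_const.mul Complex.continuous_ofReal).div_const _).neg)
  · exact ((continuous_phi f b a').comp continuous_neg).mul
      (((continuous_const.mul (Complex.continuous_ofReal.comp continuous_neg)).div_const _).neg)

/-- Global sup bounds for `f` and `deriv f`. -/
lemma f_bounds : ∃ M₀ M₁ : ℝ, (∀ x, ‖(f : ℝ → ℂ) x‖ ≤ M₀) ∧ (∀ x, ‖deriv (f : ℝ → ℂ) x‖ ≤ M₁) := by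
  obtain ⟨M₀, hM₀⟩ := f.decay 0 0
  obtain ⟨M₁, hM₁⟩ := (SchwartzMap.derivCLM ℝ ℂ f).decay 0 0
  refine ⟨M₀, M₁, fun x => ?_, fun x => ?_⟩
  · have := hM₀.2 x; simpa using this
  · have := hM₁.2 x; simpa [SchwartzMap.derivCLM_apply] using this

lemma hasDerivAt_phi_u (a' u : ℝ) :
    HasDerivAt (phi f b a')
      (deriv (f : ℝ → ℂ) (b + u) * Complex.exp (Real.pi * Complex.I * u / a') +
        f (b + u) * ((Real.pi * Complex.I / a') * Complex.exp (Real.pi * Complex.I * u / a'))) u := by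
  have hfun : phi f b a' = fun v : ℝ => (f (b + v) : ℂ) *
      Complex.exp ((Real.pi * Complex.I / a') * (v : ℂ)) := by
    funext v; simp only [phi]; congr 2; ring
  have key : ∀ v : ℝ, (Real.pi * Complex.I / a') * (v : ℂ) = Real.pi * Complex.I * v / a' :=
    fun v => by ring
  have hf : HasDerivAt (fun v : ℝ => (f (b + v) : ℂ)) (deriv (f : ℝ → ℂ) (b + u)) u := by
    have h1 : HasDerivAt (f : ℝ → ℂ) (deriv (f : ℝ → ℂ) (b + u)) (b + u) :=
      (f.differentiable.differentiableAt).hasDerivAt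
    have h2 : HasDerivAt (fun v : ℝ => b + v) (1 : ℝ) u := by
      simpa using (hasDerivAt_id u).const_add b
    simpa [Function.comp_def] using HasDerivAt.scomp u h1 h2
  have harg : HasDerivAt (fun v : ℝ => (Real.pi * Complex.I / a' : ℂ) * (v : ℂ))
      (Real.pi * Complex.I / a') u := by
    simpa using ((hasDerivAt_id ((u : ℝ) : ℂ)).const_mul
      (Real.pi * Complex.I / a' : ℂ)).comp_ofReal
  rw [hfun]
  refine (hf.mul harg.cexp).congr_deriv ?_
  rw [key]
  ring

lemma phi_lip (a' : ℝ) (ha' : 0 < a') :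
    ∃ M : ℝ, ∀ s t : ℝ, ‖phi f b a' t - phi f b a' s‖ ≤ M * ‖t - s‖ := by
  obtain ⟨M₀, M₁, h0, h1⟩ := f_bounds f
  have hnc : ‖(Real.pi * Complex.I / a' : ℂ)‖ = Real.pi / a' := by
    simp [norm_div, norm_mul, Complex.norm_I, Complex.norm_real, Real.norm_eq_abs,
      abs_of_pos Real.pi_pos, abs_of_pos ha']
  refine ⟨M₁ + Real.pi / a' * M₀, fun s t => ?_⟩
  apply convex_univ.norm_image_sub_le_of_norm_hasDerivWithin_le
    (f' := fun u => deriv (f : ℝ → ℂ) (b + u) * Complex.exp (Real.pi * Complex.I * u / a') +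
      f (b + u) * ((Real.pi * Complex.I / a') * Complex.exp (Real.pi * Complex.I * u / a')))
    (fun x _ => (hasDerivAt_phi_u f b a' x).hasDerivWithinAt) ?_ trivial trivial
  intro x _
  calc ‖deriv (f : ℝ → ℂ) (b + x) * Complex.exp (Real.pi * Complex.I * x / a') +
      f (b + x) * ((Real.pi * Complex.I / a') * Complex.exp (Real.pi * Complex.I * x / a'))‖
      ≤ ‖deriv (f : ℝ → ℂ) (b + x) * Complex.exp (Real.pi * Complex.I * x / a')‖ +
        ‖f (b + x) * ((Real.pi * Complex.I / a') * Complex.exp (Real.pi * Complex.I * x / a'))‖ :=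
        norm_add_le _ _
    _ = ‖deriv (f : ℝ → ℂ) (b + x)‖ + ‖f (b + x)‖ * (Real.pi / a') := by
        rw [norm_mul, norm_cexp, norm_mul, norm_mul, norm_cexp, hnc]; ring
    _ ≤ M₁ + Real.pi / a' * M₀ := by
        have := h0 (b + x); have := h1 (b + x); nlinarith [norm_nonneg ((f : ℝ → ℂ) (b + x)),
          Real.pi_pos.le, le_of_lt ha', div_nonneg Real.pi_pos.le ha'.le]

lemma hasDerivAt_phi_a (u : ℝ) {a' : ℝ} (ha' : a' ≠ 0) :
    HasDerivAt (fun c : ℝ => phi f b c u)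
      (phi f b a' u * (-(Real.pi * Complex.I * u / (a' : ℂ) ^ 2))) a' := by
  have hfun : (fun c : ℝ => phi f b c u) = fun c : ℝ =>
      (f (b + u) : ℂ) * Complex.exp ((Real.pi * Complex.I * u : ℂ) * ((c : ℂ))⁻¹) := by
    funext c; simp only [phi, div_eq_mul_inv]
  rw [hfun]
  have hinv : HasDerivAt (fun c : ℝ => ((c : ℂ))⁻¹) (-(((a' : ℂ)) ^ 2)⁻¹) a' := by
    have hne : ((a' : ℝ) : ℂ) ≠ 0 := by exact_mod_cast ha'
    simpa using (hasDerivAt_inv hne).comp_ofReal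
  have harg := hinv.const_mul (Real.pi * Complex.I * u : ℂ)
  have hfin := harg.cexp.const_mul (f (b + u) : ℂ)
  refine hfin.congr_deriv ?_
  simp only [phi, div_eq_mul_inv]
  ring

lemma integrable_translate : Integrable (fun s : ℝ => (f (b + s) : ℂ)) := by
  have h := (measurePreserving_add_left (volume : Measure ℝ) b).integrable_comp
    f.continuous.aestronglyMeasurable
  exact h.2 (f.integrable)

lemma integrable_reflect : Integrable (fun s : ℝ => (f (b - s) : ℂ)) := by
  have h := (Measure.measurePreserving_sub_left (volume : Measure ℝ) b).integrable_comp
    f.continuous.aestronglyMeasurable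
  exact h.2 (f.integrable)

lemma integrable_phi (a' : ℝ) : Integrable (phi f b a') := by
  refine (integrable_translate f b).norm.mono' ((continuous_phi f b a').aestronglyMeasurable) ?_
  filter_upwards with u
  rw [norm_phi]

lemma integrable_phi_neg (a' : ℝ) : Integrable (fun s => phi f b a' (-s)) := by
  have h := (Measure.measurePreserving_neg (volume : Measure ℝ)).integrable_comp
    ((continuous_phi f b a').aestronglyMeasurable)
  exact h.2 (integrable_phi f b a')

/-- Integrability of the kernel on `(0,∞)`. -/
lemma aesm_psi (a' : ℝ) (μ : Measure ℝ) :
    AEStronglyMeasurable (fun u => phi f b a' u / (u : ℂ)) μ := by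
  simp only [div_eq_mul_inv]
  exact ((continuous_phi f b a').aestronglyMeasurable).mul
    (Complex.measurable_ofReal.inv.aestronglyMeasurable)

lemma norm_cexp2 (a' t c : ℝ) :
    ‖Complex.exp (Real.pi * Complex.I * ((t : ℂ) - (c : ℂ)) / (a' : ℂ))‖ = 1 := by
  rw [show (Real.pi * Complex.I * ((t : ℂ) - (c : ℂ)) / (a' : ℂ)) =
      ((Real.pi * (t - c) / a' : ℝ) : ℂ) * Complex.I by push_cast; ring,
    Complex.norm_exp_ofReal_mul_I]

lemma norm_ofReal_complex (s : ℝ) : ‖(s : ℂ)‖ = |s| := by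
  simp [Complex.norm_real, Real.norm_eq_abs]

lemma intK (a' : ℝ) (ha' : 0 < a') : IntegrableOn (K f b a') (Ioi 0) := by
  obtain ⟨M, hM⟩ := phi_lip f b a' ha'
  have hunion : Ioc (0:ℝ) 1 ∪ Ioi 1 = Ioi 0 := Ioc_union_Ioi_eq_Ioi zero_le_one
  rw [← hunion]
  apply IntegrableOn.union
  · refine Integrable.mono' (integrable_const (2 * M)) (aesm_K f b a' _) ?_
    rw [ae_restrict_iff' measurableSet_Ioc]
    filter_upwards with s hs
    have hs0 : (0:ℝ) < s := hs.1
    have h1 : ‖phi f b a' s - phi f b a' (-s)‖ ≤ M * (2 * s) := by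
      have := hM (-s) s
      have he : ‖s - -s‖ = 2 * s := by
        rw [sub_neg_eq_add, Real.norm_eq_abs, abs_of_pos (by linarith)]; ring
      rw [he] at this; exact this
    rw [K, norm_div, norm_ofReal_complex, abs_of_pos hs0, div_le_iff₀ hs0]
    nlinarith
  · refine Integrable.mono'
      (((integrable_translate f b).norm.add (integrable_reflect f b).norm).integrableOn)
      (aesm_K f b a' _) ?_
    rw [ae_restrict_iff' measurableSet_Ioi]
    filter_upwards with s hs
    have hs1 : (1:ℝ) < s := hs
    rw [K, norm_div, norm_ofReal_complex, abs_of_pos (by linarith)]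
    have h2 : ‖phi f b a' s - phi f b a' (-s)‖ ≤ ‖(f (b + s) : ℂ)‖ + ‖(f (b - s) : ℂ)‖ := by
      refine (norm_sub_le _ _).trans ?_
      rw [norm_phi, norm_phi]
      simp [sub_eq_add_neg]
    calc ‖phi f b a' s - phi f b a' (-s)‖ / s ≤ ‖phi f b a' s - phi f b a' (-s)‖ :=
          div_le_self (norm_nonneg _) (by linarith)
      _ ≤ ‖(f (b + s) : ℂ)‖ + ‖(f (b - s) : ℂ)‖ := h2

/-- Substitution: the PV set integral equals the symmetrized integral. -/
lemma pv_eq (a' : ℝ) (ha' : 0 < a') (ε : ℝ) (hε : 0 < ε) :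
    (∫ t in {t : ℝ | ε ≤ |t - b|},
        f t * Complex.exp (Real.pi * Complex.I * (t - b) / a') / ((t : ℂ) - b)) =
      ∫ s in Ioi ε, K f b a' s := by
  set g : ℝ → ℂ := fun t => f t * Complex.exp (Real.pi * Complex.I * (t - b) / a') /
    ((t : ℂ) - b) with hgdef
  set ψ : ℝ → ℂ := fun u => phi f b a' u / (u : ℂ) with hψdef
  have hgb : ∀ u : ℝ, g (b + u) = ψ u := by
    intro u
    simp only [hgdef, hψdef, phi, add_sub_cancel_left]
    push_cast
    ring_nf
  -- Step 1: translation
  have h1 : (∫ t in {t : ℝ | ε ≤ |t - b|}, g t) = ∫ u in {u : ℝ | ε ≤ |u|}, ψ u := by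
    have hpre : (fun u : ℝ => b + u) ⁻¹' {t : ℝ | ε ≤ |t - b|} = {u : ℝ | ε ≤ |u|} := by
      ext u; simp [Set.mem_setOf_eq, add_sub_cancel_left]
    have h := (measurePreserving_add_left (volume : Measure ℝ) b).setIntegral_preimage_emb
      (MeasurableEquiv.addLeft b).measurableEmbedding g {t : ℝ | ε ≤ |t - b|}
    rw [hpre] at h
    rw [← h]
    exact setIntegral_congr_fun (isClosed_le continuous_const _root_.continuous_abs).measurableSet
      (fun u _ => hgb u)
  -- Integrability of ψ on the two half lines
  have hψplus : IntegrableOn ψ (Ici ε) := by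
    refine Integrable.mono' (((integrable_translate f b).norm.const_mul ε⁻¹).integrableOn)
      (aesm_psi f b a' _) ?_
    rw [ae_restrict_iff' measurableSet_Ici]
    filter_upwards with u hu
    have hu0 : (0:ℝ) < u := lt_of_lt_of_le hε hu
    simp only [hψdef, norm_div, norm_ofReal_complex, abs_of_pos hu0, norm_phi]
    rw [div_eq_inv_mul]
    gcongr
    exact hu
  have hψminus : IntegrableOn ψ (Iic (-ε)) := by
    refine Integrable.mono' (((integrable_translate f b).norm.const_mul ε⁻¹).integrableOn)
      (aesm_psi f b a' _) ?_
    rw [ae_restrict_iff' measurableSet_Iic]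
    filter_upwards with u hu
    rw [mem_Iic] at hu
    have hu0 : u < 0 := lt_of_le_of_lt hu (by linarith)
    simp only [hψdef, norm_div, norm_ofReal_complex, abs_of_neg hu0, norm_phi]
    rw [div_eq_inv_mul]
    gcongr
    linarith
  -- Step 2: split
  have hsplit : {u : ℝ | ε ≤ |u|} = Iic (-ε) ∪ Ici ε := by
    ext u
    simp only [Set.mem_setOf_eq, Set.mem_union, mem_Iic, mem_Ici, le_abs, le_neg]
    tauto
  have hdisj : Disjoint (Iic (-ε)) (Ici ε) := by
    rw [Set.disjoint_left]
    intro u h1 h2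
    simp only [mem_Iic] at h1; simp only [mem_Ici] at h2
    linarith
  have h2 : (∫ u in {u : ℝ | ε ≤ |u|}, ψ u) =
      (∫ u in Iic (-ε), ψ u) + ∫ u in Ici ε, ψ u := by
    rw [hsplit, setIntegral_union hdisj measurableSet_Ici hψminus hψplus]
  -- Step 3: reflection
  have h3 : (∫ u in Iic (-ε), ψ u) = ∫ u in Ici ε, ψ (-u) := by
    have hpre : (fun u : ℝ => -u) ⁻¹' (Iic (-ε)) = Ici ε := by
      ext u; simp [neg_le_neg_iff, le_neg]
    have h := (Measure.measurePreserving_neg (volume : Measure ℝ)).setIntegral_preimage_emb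
      (MeasurableEquiv.neg ℝ).measurableEmbedding ψ (Iic (-ε))
    rw [hpre] at h
    rw [← h]
  -- ψ(-·) integrable on Ici ε
  have hψneg : IntegrableOn (fun u => ψ (-u)) (Ici ε) := by
    refine Integrable.mono' (((integrable_reflect f b).norm.const_mul ε⁻¹).integrableOn)
      ?_ ?_
    · have heq : (fun u => ψ (-u)) = fun u => phi f b a' (-u) * (((-u : ℝ) : ℂ))⁻¹ := by
        funext u; simp [hψdef, div_eq_mul_inv]
      rw [heq]
      exact (((continuous_phi f b a').comp continuous_neg).aestronglyMeasurable).mul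
        ((Complex.measurable_ofReal.comp measurable_neg).inv.aestronglyMeasurable)
    rw [ae_restrict_iff' measurableSet_Ici]
    filter_upwards with u hu
    have hu0 : (0:ℝ) < u := lt_of_lt_of_le hε hu
    simp only [hψdef, norm_div, norm_ofReal_complex, abs_neg, abs_of_pos hu0, norm_phi]
    rw [div_eq_inv_mul, sub_eq_add_neg]
    gcongr
    exact hu
  -- Step 4: combine
  have h4 : (∫ u in Ici ε, ψ (-u)) + (∫ u in Ici ε, ψ u) = ∫ u in Ici ε, K f b a' u := by
    rw [← integral_add hψneg hψplus]
    refine setIntegral_congr_fun measurableSet_Ici (fun u hu => ?_)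
    have hu0 : (0:ℝ) < u := lt_of_lt_of_le hε hu
    have huc : (u : ℂ) ≠ 0 := by exact_mod_cast hu0.ne'
    simp only [hψdef, K]
    push_cast
    field_simp
    ring
  calc (∫ t in {t : ℝ | ε ≤ |t - b|}, g t) = (∫ u in Iic (-ε), ψ u) + ∫ u in Ici ε, ψ u := by
        rw [h1, h2]
    _ = ∫ u in Ici ε, K f b a' u := by rw [h3, h4]
    _ = ∫ s in Ioi ε, K f b a' s := integral_Ici_eq_integral_Ioi

/-- PV convergence. -/
lemma pv_tendsto (a' : ℝ) (ha' : 0 < a') :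
    Tendsto (fun ε : ℝ => ∫ s in Ioi ε, K f b a' s) (nhdsWithin 0 (Ioi 0))
      (nhds (∫ s in Ioi (0:ℝ), K f b a' s)) := by
  have key : Tendsto (fun ε : ℝ => ∫ s in Ioi (0:ℝ), (Ioi ε).indicator (K f b a') s)
      (nhdsWithin 0 (Ioi 0)) (nhds (∫ s in Ioi (0:ℝ), K f b a' s)) := by
    apply MeasureTheory.tendsto_integral_filter_of_dominated_convergence
      (fun s => ‖K f b a' s‖)
    · filter_upwards with ε
      exact (aesm_K f b a' _).indicator measurableSet_Ioi
    · filter_upwards with ε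
      filter_upwards with s
      exact norm_indicator_le_norm_self _ _
    · exact (intK f b a' ha').norm
    · filter_upwards [ae_restrict_mem measurableSet_Ioi] with s hs
      rw [mem_Ioi] at hs
      refine tendsto_const_nhds.congr' ?_
      filter_upwards [Ioo_mem_nhdsGT_of_mem (⟨le_refl 0, hs⟩ : (0:ℝ) ∈ Ico 0 s)] with ε hε
      exact (indicator_of_mem (mem_Ioi.2 hε.2) _).symm
  refine key.congr' ?_
  filter_upwards [self_mem_nhdsWithin] with ε hε
  rw [mem_Ioi] at hε
  rw [setIntegral_indicator measurableSet_Ioi, Ioi_inter_Ioi, max_eq_right hε.le]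

/-- Differentiation under the integral. -/
lemma hasDerivAt_intK (a : ℝ) (ha : 0 < a) :
    HasDerivAt (fun a' => ∫ s in Ioi (0:ℝ), K f b a' s)
      (∫ s in Ioi (0:ℝ), K' f b a s) a := by
  have h2a : 0 < a / 2 := by linarith
  have hball : ∀ a' : ℝ, a' ∈ Metric.ball a (a / 2) → a / 2 < a' := by
    intro a' ha'
    rw [Metric.mem_ball, Real.dist_eq, abs_lt] at ha'
    linarith [ha'.1]
  have key := hasDerivAt_integral_of_dominated_loc_of_deriv_le (μ := volume.restrict (Ioi 0))
    (F := fun a' s => K f b a' s) (F' := fun a' s => K' f b a' s) (x₀ := a)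
    (bound := fun s => Real.pi / (a / 2) ^ 2 * (‖(f (b + s) : ℂ)‖ + ‖(f (b - s) : ℂ)‖))
    (s := Metric.ball a (a / 2)) (Metric.ball_mem_nhds a h2a) ?_ ?_ ?_ ?_ ?_ ?_
  · exact key.2
  · filter_upwards with a'
    exact aesm_K f b a' _
  · exact intK f b a ha
  · exact aesm_K' f b a _
  · filter_upwards [ae_restrict_mem measurableSet_Ioi] with s hs
    rw [mem_Ioi] at hs
    intro a' ha'
    have ha'2 : a / 2 < a' := hball a' ha'
    have ha'0 : 0 < a' := lt_trans h2a ha'2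
    have hnum : ∀ u : ℝ, ‖(-(Real.pi * Complex.I * (u : ℝ) / (a' : ℂ) ^ 2) : ℂ)‖ =
        Real.pi * |u| / a' ^ 2 := by
      intro u
      rw [norm_neg, norm_div, norm_mul, norm_mul]
      simp only [Complex.norm_I, Complex.norm_real, Real.norm_eq_abs, norm_pow]
      rw [abs_of_pos Real.pi_pos, abs_of_pos ha'0, mul_one]
    rw [K', norm_div, norm_ofReal_complex, abs_of_pos hs]
    have hb1 : ‖phi f b a' s * (-(Real.pi * Complex.I * (s : ℝ) / (a' : ℂ) ^ 2)) -
        phi f b a' (-s) * (-(Real.pi * Complex.I * ((-s : ℝ) : ℝ) / (a' : ℂ) ^ 2))‖ ≤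
        (‖(f (b + s) : ℂ)‖ + ‖(f (b - s) : ℂ)‖) * (Real.pi * s / a' ^ 2) := by
      refine (norm_sub_le _ _).trans ?_
      rw [norm_mul, norm_mul, hnum s, hnum (-s), norm_phi, norm_phi, abs_neg,
        abs_of_pos hs]
      have : (f (b + -s) : ℂ) = (f (b - s) : ℂ) := by rw [← sub_eq_add_neg]
      rw [this]
      ring_nf
      nlinarith [norm_nonneg ((f : ℝ → ℂ) (b + s)), norm_nonneg ((f : ℝ → ℂ) (b - s)),
        Real.pi_pos.le, sq_nonneg a', mul_pos hs (div_pos Real.pi_pos (pow_pos ha'0 2))]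
    rw [div_le_iff₀ hs]
    calc ‖phi f b a' s * (-(Real.pi * Complex.I * (s : ℝ) / (a' : ℂ) ^ 2)) -
        phi f b a' (-s) * (-(Real.pi * Complex.I * ((-s : ℝ) : ℝ) / (a' : ℂ) ^ 2))‖ ≤
        (‖(f (b + s) : ℂ)‖ + ‖(f (b - s) : ℂ)‖) * (Real.pi * s / a' ^ 2) := hb1
      _ ≤ Real.pi / (a / 2) ^ 2 * (‖(f (b + s) : ℂ)‖ + ‖(f (b - s) : ℂ)‖) * s := by
          have h1 : (a / 2) ^ 2 ≤ a' ^ 2 := by nlinarith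
          have h2 : Real.pi * s / a' ^ 2 ≤ Real.pi / (a / 2) ^ 2 * s := by
            rw [div_le_iff₀ (pow_pos ha'0 2), div_mul_eq_mul_div, div_mul_eq_mul_div,
              le_div_iff₀ (pow_pos h2a 2)]
            nlinarith [mul_le_mul_of_nonneg_left h1 (mul_pos Real.pi_pos hs).le]
          have hnn : 0 ≤ ‖(f (b + s) : ℂ)‖ + ‖(f (b - s) : ℂ)‖ := by positivity
          nlinarith [mul_le_mul_of_nonneg_left h2 hnn]
  · exact (((integrable_translate f b).norm.add
      (integrable_reflect f b).norm).const_mul _).integrableOn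
  · filter_upwards with s
    intro a' ha'
    have ha'0 : (0:ℝ) < a' := lt_trans h2a (hball a' ha')
    have ha'ne : a' ≠ 0 := ha'0.ne'
    exact ((hasDerivAt_phi_a f b s ha'ne).sub (hasDerivAt_phi_a f b (-s) ha'ne)).div_const _

/-- Evaluation of the derivative integral. -/
lemma intK'_eq (a : ℝ) (ha : 0 < a) :
    (∫ s in Ioi (0:ℝ), K' f b a s) =
      (-(Real.pi * Complex.I / (a : ℂ) ^ 2)) *
        ∫ t : ℝ, f t * Complex.exp (Real.pi * Complex.I * (t - b) / a) := by
  set g : ℝ → ℂ := fun t => f t * Complex.exp (Real.pi * Complex.I * (t - b) / a) with hgdef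
  have hcont_g : Continuous g := by
    apply f.continuous.mul
    exact Complex.continuous_exp.comp
      ((continuous_const.mul (Complex.continuous_ofReal.sub continuous_const)).div_const _)
  have hint_g : Integrable g := by
    refine (f.integrable (μ := volume)).norm.mono' hcont_g.aestronglyMeasurable ?_
    filter_upwards with t
    rw [hgdef]
    simp only [norm_mul, norm_cexp2 a t b, mul_one, le_refl]
  -- step 1: pointwise identity on Ioi 0
  have hstep : ∀ s ∈ Ioi (0:ℝ), K' f b a s =
      (-(Real.pi * Complex.I / (a : ℂ) ^ 2)) * (phi f b a s + phi f b a (-s)) := by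
    intro s hs
    rw [mem_Ioi] at hs
    have hsc : (s : ℂ) ≠ 0 := by exact_mod_cast hs.ne'
    rw [K']
    push_cast
    field_simp
    ring
  rw [setIntegral_congr_fun measurableSet_Ioi hstep, integral_const_mul]
  congr 1
  rw [integral_add ((integrable_phi f b a).integrableOn) ((integrable_phi_neg f b a).integrableOn)]
  -- translate the plus piece
  have hplus : (∫ s in Ioi (0:ℝ), phi f b a s) = ∫ t in Ioi b, g t := by
    have hpre : (fun u : ℝ => b + u) ⁻¹' Ioi b = Ioi 0 := by
      ext u; simp
    have h := (measurePreserving_add_left (volume : Measure ℝ) b).setIntegral_preimage_emb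
      (MeasurableEquiv.addLeft b).measurableEmbedding g (Ioi b)
    rw [hpre] at h
    rw [← h]
    refine setIntegral_congr_fun measurableSet_Ioi (fun u _ => ?_)
    simp only [hgdef, phi]
    push_cast
    ring_nf
  have hminus : (∫ s in Ioi (0:ℝ), phi f b a (-s)) = ∫ t in Iio b, g t := by
    have hpre : (fun u : ℝ => b - u) ⁻¹' Iio b = Ioi 0 := by
      ext u; simp
    have h := (Measure.measurePreserving_sub_left (volume : Measure ℝ) b).setIntegral_preimage_emb
      (MeasurableEquiv.subLeft b).measurableEmbedding g (Iio b)
    rw [hpre] at h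
    rw [← h]
    refine setIntegral_congr_fun measurableSet_Ioi (fun u _ => ?_)
    have h1 : b + -u = b - u := by ring
    simp only [hgdef, phi, h1]
    push_cast
    ring_nf
  rw [hplus, hminus, add_comm, ← integral_Ici_eq_integral_Ioi,
    intervalIntegral.integral_Iio_add_Ici (hint_g.integrableOn) (hint_g.integrableOn)]

end W2Aux

end

open W2Aux

theorem hasDerivAt_W2_scale (f : SchwartzMap ℝ ℂ) (b : ℝ) (a : ℝ) (ha : 0 < a) :
    ∃ W₂ : ℝ → ℂ,
      (∀ a' : ℝ, 0 < a' →
        Tendsto (fun ε : ℝ =>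
            -(Complex.I / (2 * (Real.pi : ℂ) ^ 2)) * ∫ t in {t : ℝ | ε ≤ |t - b|},
              f t * Complex.exp (Real.pi * Complex.I * (t - b) / a') / ((t : ℂ) - b))
          (nhdsWithin 0 (Ioi 0)) (nhds (W₂ a'))) ∧
      HasDerivAt W₂
        (-(1 / (2 * (Real.pi : ℂ) * a ^ 2)) *
          ∫ t : ℝ, f t * Complex.exp (Real.pi * Complex.I * (t - b) / a)) a := by
  refine ⟨W f b, fun a' ha' => ?_, ?_⟩
  · have h := ((pv_tendsto f b a' ha').const_mul (-(Complex.I / (2 * (Real.pi : ℂ) ^ 2))))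
    refine h.congr' ?_
    filter_upwards [self_mem_nhdsWithin] with ε (hε : ε ∈ Ioi (0:ℝ))
    rw [pv_eq f b a' ha' ε hε]
  · have h := ((hasDerivAt_intK f b a ha).const_mul (-(Complex.I / (2 * (Real.pi : ℂ) ^ 2))))
    have : (-(Complex.I / (2 * (Real.pi : ℂ) ^ 2))) * (∫ s in Ioi (0:ℝ), K' f b a s) =
        (-(1 / (2 * (Real.pi : ℂ) * a ^ 2)) *
          ∫ t : ℝ, f t * Complex.exp (Real.pi * Complex.I * (t - b) / a)) := by
      rw [intK'_eq f b a ha]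
      have hπ : (Real.pi : ℂ) ≠ 0 := by exact_mod_cast Real.pi_ne_zero
      have ha0 : (a : ℂ) ≠ 0 := by exact_mod_cast ha.ne'
      rw [← mul_assoc]
      congr 1
      field_simp
      ring_nf
      rw [Complex.I_sq]
    rw [this] at h
    exact h
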